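/- Let P be a polyomino and let (P₁, P₂) be a valid vertical or horizontal straight 2-cut of P along a locally reflex tile. Then w(P₁) + w(P₂) ≤ w(P) − 1, where w(Q) denotes the number of reflex witnesses of a polyomino Q; i.e., each straight 2-cut along a locally reflex tile strictly decreases the total number of reflex witnesses, and no new reflex witness is created in either piece. -/
import Mathlib


/-- Two grid points are adjacent if they are at Euclidean distance 1. -/
def Adj (p q : ℤ × ℤ) : Prop := |p.1 - q.1| + |p.2 - q.2| = 1

/-- A set of grid points induces a connected grid graph. -/
def GridConnected (S : Set (ℤ × ℤ)) : Prop :=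
  ∀ p ∈ S, ∀ q ∈ S,
    Relation.ReflTransGen (fun a b => a ∈ S ∧ b ∈ S ∧ Adj a b) p q

/-- A polyomino: a finite nonempty set of grid points with connected grid graph. -/
def IsPolyomino (P : Finset (ℤ × ℤ)) : Prop :=
  P.Nonempty ∧ GridConnected ↑P

/-- x-monotone (column convex). -/
def ColumnConvex (S : Set (ℤ × ℤ)) : Prop :=
  ∀ x y₁ y₂ y : ℤ, (x, y₁) ∈ S → (x, y₂) ∈ S → y₁ ≤ y → y ≤ y₂ → (x, y) ∈ S

/-- y-monotone (row convex). -/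
def RowConvex (S : Set (ℤ × ℤ)) : Prop :=
  ∀ y x₁ x₂ x : ℤ, (x₁, y) ∈ S → (x₂, y) ∈ S → x₁ ≤ x → x ≤ x₂ → (x, y) ∈ S

/-- Orthogonally convex. -/
def OrthoConvex (S : Set (ℤ × ℤ)) : Prop := ColumnConvex S ∧ RowConvex S

/-- Simple (hole-free): the complement induces a connected grid graph. -/
def SimplePoly (P : Finset (ℤ × ℤ)) : Prop :=
  GridConnected ((↑P : Set (ℤ × ℤ))ᶜ)

/-- Left piece of the vertical cut at `c`. -/
def PLe (P : Finset (ℤ × ℤ)) (c : ℤ) : Finset (ℤ × ℤ) :=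
  P.filter (fun p => p.1 ≤ c)

/-- Right piece of the vertical cut at `c`. -/
def PGt (P : Finset (ℤ × ℤ)) (c : ℤ) : Finset (ℤ × ℤ) :=
  P.filter (fun p => c < p.1)

/-- Vertical straight 2-cut of `P` at position `c` into left piece `P₁` and right
piece `P₂`. -/
def IsVCut (P P₁ P₂ : Finset (ℤ × ℤ)) (c : ℤ) : Prop :=
  P₁ ∪ P₂ = P ∧ Disjoint P₁ P₂ ∧ P₁.Nonempty ∧ P₂.Nonempty ∧
  GridConnected ↑P₁ ∧ GridConnected ↑P₂ ∧
  ∀ p ∈ P₁, ∀ q ∈ P₂, Adj p q → p.1 = c ∧ q.1 = c + 1 ∧ p.2 = q.2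

/-- Valid vertical straight 2-cut: the pieces can be pulled apart horizontally. -/
def ValidVCut (P P₁ P₂ : Finset (ℤ × ℤ)) (c : ℤ) : Prop :=
  IsVCut P P₁ P₂ c ∧ ∀ k : ℤ, 1 ≤ k → ∀ p ∈ P₂, (p.1 + k, p.2) ∉ P₁

/-- Horizontal straight 2-cut of `P` at position `c` into bottom piece `P₁` and
top piece `P₂` (coordinates exchanged). -/
def IsHCut (P P₁ P₂ : Finset (ℤ × ℤ)) (c : ℤ) : Prop :=
  P₁ ∪ P₂ = P ∧ Disjoint P₁ P₂ ∧ P₁.Nonempty ∧ P₂.Nonempty ∧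
  GridConnected ↑P₁ ∧ GridConnected ↑P₂ ∧
  ∀ p ∈ P₁, ∀ q ∈ P₂, Adj p q → p.2 = c ∧ q.2 = c + 1 ∧ p.1 = q.1

/-- Valid horizontal straight 2-cut: the pieces can be pulled apart vertically. -/
def ValidHCut (P P₁ P₂ : Finset (ℤ × ℤ)) (c : ℤ) : Prop :=
  IsHCut P P₁ P₂ c ∧ ∀ k : ℤ, 1 ≤ k → ∀ p ∈ P₂, (p.1, p.2 + k) ∉ P₁

/-- The part of the decomposition of `P` by the vertical cut positions `C`
that contains the point `p`. -/
def CutPart (P : Finset (ℤ × ℤ)) (C : Finset ℤ) (p : ℤ × ℤ) : Finset (ℤ × ℤ) :=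
  P.filter (fun q => ∀ c ∈ C, (q.1 ≤ c ↔ p.1 ≤ c))

/-- The vertical cut positions `C` decompose `P` into orthogonally convex parts. -/
def Decomposes (P : Finset (ℤ × ℤ)) (C : Finset ℤ) : Prop :=
  ∀ p ∈ P, OrthoConvex ↑(CutPart P C p)

/-- The decomposition number `d(P)`: the minimum number of vertical cut positions
decomposing `P` into orthogonally convex parts. -/
noncomputable def decompNumber (P : Finset (ℤ × ℤ)) : ℕ :=
  sInf {k | ∃ C : Finset ℤ, C.card = k ∧ Decomposes P C}

/-- `(a, b, y₀)` is a minimum of the upper envelope of `P`. -/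
def UpperEnvMin (P : Set (ℤ × ℤ)) (a b y₀ : ℤ) : Prop :=
  a + 2 ≤ b ∧ (∀ x : ℤ, a ≤ x → x ≤ b → (x, y₀) ∈ P) ∧
  (a, y₀ + 1) ∈ P ∧ (b, y₀ + 1) ∈ P ∧ ∀ x : ℤ, a < x → x < b → (x, y₀ + 1) ∉ P

/-- `(a, b, y₀)` is a maximum of the lower envelope of `P`. -/
def LowerEnvMax (P : Set (ℤ × ℤ)) (a b y₀ : ℤ) : Prop :=
  a + 2 ≤ b ∧ (∀ x : ℤ, a ≤ x → x ≤ b → (x, y₀) ∈ P) ∧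
  (a, y₀ - 1) ∈ P ∧ (b, y₀ - 1) ∈ P ∧ ∀ x : ℤ, a < x → x < b → (x, y₀ - 1) ∉ P

/-- The four cells of the 2×2 square with lower-left corner `s`. -/
def SquareCells (s : ℤ × ℤ) : Finset (ℤ × ℤ) :=
  {s, (s.1 + 1, s.2), (s.1, s.2 + 1), (s.1 + 1, s.2 + 1)}

/-- A 2×2 square (given by its lower-left corner `s`) is a reflex witness of `P`
if it contains exactly three points of `P`. -/
def ReflexWitness (P : Finset (ℤ × ℤ)) (s : ℤ × ℤ) : Prop :=
  (SquareCells s ∩ P).card = 3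

/-- The number of reflex witnesses of `P`. -/
noncomputable def wRef (P : Finset (ℤ × ℤ)) : ℕ :=
  Set.ncard {s : ℤ × ℤ | ReflexWitness P s}

/-- A tile `t` is locally reflex: it is the corner tile of some reflex witness,
i.e. the square cell opposite to `t` is the one missing from `P`. -/
def LocallyReflex (P : Finset (ℤ × ℤ)) (t : ℤ × ℤ) : Prop :=
  ∃ s : ℤ × ℤ, ReflexWitness P s ∧ t ∈ SquareCells s ∧
    (2 * s.1 + 1 - t.1, 2 * s.2 + 1 - t.2) ∉ P

/-- The number of locally reflex tiles of `P`. -/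
noncomputable def rRef (P : Finset (ℤ × ℤ)) : ℕ :=
  Set.ncard {t : ℤ × ℤ | LocallyReflex P t}

/-- A tile `t` is locally convex: some 2×2 square contains `t` and no other
point of `P`. -/
def LocallyConvex (P : Finset (ℤ × ℤ)) (t : ℤ × ℤ) : Prop :=
  ∃ s : ℤ × ℤ, t ∈ SquareCells s ∧ SquareCells s ∩ P = {t}

/-- A straight 2-cut `(P₁, P₂)` is along a locally reflex tile of `P`. -/
def AlongReflex (P P₁ P₂ : Finset (ℤ × ℤ)) : Prop :=
  ∃ s : ℤ × ℤ, ReflexWitness P s ∧ (SquareCells s ∩ P₁).Nonempty ∧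
    (SquareCells s ∩ P₂).Nonempty

/-- A valid (not necessarily straight) 2-cut of `P` into `P₁` and `P₂`. -/
def ValidCut (P P₁ P₂ : Finset (ℤ × ℤ)) : Prop :=
  P₁ ∪ P₂ = P ∧ Disjoint P₁ P₂ ∧ P₁.Nonempty ∧ P₂.Nonempty ∧
  GridConnected ↑P₁ ∧ GridConnected ↑P₂ ∧
  ∃ v ∈ ({(1, 0), (-1, 0), (0, 1), (0, -1)} : Set (ℤ × ℤ)),
    ∀ k : ℤ, 1 ≤ k → ∀ p ∈ P₂, (p.1 + k * v.1, p.2 + k * v.2) ∉ P₁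

/-- A polyomino is 2-cuttable: it is orthogonally convex, or some valid 2-cut
splits it into two 2-cuttable polyominoes. -/
inductive TwoCuttable : Finset (ℤ × ℤ) → Prop
  | convex (P : Finset (ℤ × ℤ)) : IsPolyomino P → OrthoConvex ↑P → TwoCuttable P
  | cut (P P₁ P₂ : Finset (ℤ × ℤ)) : ValidCut P P₁ P₂ →
      TwoCuttable P₁ → TwoCuttable P₂ → TwoCuttable P

/-- A polyomino is straight 2-cuttable: it is orthogonally convex, or some valid
vertical or horizontal straight 2-cut splits it into two straight 2-cuttable
polyominoes. -/
inductive Straight2Cuttable : Finset (ℤ × ℤ) → Prop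
  | convex (P : Finset (ℤ × ℤ)) : IsPolyomino P → OrthoConvex ↑P → Straight2Cuttable P
  | vcut (P P₁ P₂ : Finset (ℤ × ℤ)) (c : ℤ) : ValidVCut P P₁ P₂ c →
      Straight2Cuttable P₁ → Straight2Cuttable P₂ → Straight2Cuttable P
  | hcut (P P₁ P₂ : Finset (ℤ × ℤ)) (c : ℤ) : ValidHCut P P₁ P₂ c →
      Straight2Cuttable P₁ → Straight2Cuttable P₂ → Straight2Cuttable P



section Stmt11Aux

lemma adj_symm' {p q : ℤ × ℤ} (h : Adj p q) : Adj q p := by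
  simpa [Adj, abs_sub_comm] using h

lemma squareCard' (s : ℤ × ℤ) : (SquareCells s).card = 4 := by
  have h : (SquareCells s : Finset (ℤ × ℤ)) =
      {s, (s.1 + 1, s.2), (s.1, s.2 + 1), (s.1 + 1, s.2 + 1)} := rfl
  rw [h]
  rw [Finset.card_insert_of_notMem, Finset.card_insert_of_notMem,
      Finset.card_insert_of_notMem, Finset.card_singleton] <;>
    simp [Prod.ext_iff]

/-- If a 2×2 square has 3 cells in `A` and `q` is the fourth cell (not in `A`),
then `q` has a vertical neighbor and a horizontal neighbor in `A` within the square. -/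
lemma neighbors_in' (A : Finset (ℤ × ℤ)) (s q : ℤ × ℤ)
    (hA : (SquareCells s ∩ A).card = 3) (hqT : q ∈ SquareCells s) (hqA : q ∉ A) :
    ∃ n m : ℤ × ℤ, n ∈ A ∧ m ∈ A ∧ Adj n q ∧ n.1 = q.1 ∧ Adj m q ∧ m.2 = q.2 := by
  have hsub : SquareCells s ∩ A ⊆ (SquareCells s).erase q := by
    intro x hx
    rw [Finset.mem_erase]
    refine ⟨?_, (Finset.mem_inter.1 hx).1⟩
    rintro rfl; exact hqA (Finset.mem_inter.1 hx).2
  have hcard : ((SquareCells s).erase q).card = 3 := by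
    rw [Finset.card_erase_of_mem hqT, squareCard']
  have heq : SquareCells s ∩ A = (SquareCells s).erase q :=
    Finset.eq_of_subset_of_card_le hsub (by omega)
  have hmem : ∀ x ∈ SquareCells s, x ≠ q → x ∈ A := by
    intro x hx hne
    have hx2 : x ∈ SquareCells s ∩ A := heq ▸ Finset.mem_erase.2 ⟨hne, hx⟩
    exact (Finset.mem_inter.1 hx2).2
  simp only [SquareCells, Finset.mem_insert, Finset.mem_singleton] at hqT
  obtain ⟨s1, s2⟩ := s
  rcases hqT with rfl | rfl | rfl | rfl
  · exact ⟨(s1, s2 + 1), (s1 + 1, s2),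
      hmem _ (by simp [SquareCells]) (by simp [Prod.ext_iff]),
      hmem _ (by simp [SquareCells]) (by simp [Prod.ext_iff]),
      by simp [Adj], rfl, by simp [Adj], rfl⟩
  · exact ⟨(s1 + 1, s2 + 1), (s1, s2),
      hmem _ (by simp [SquareCells]) (by simp [Prod.ext_iff]),
      hmem _ (by simp [SquareCells]) (by simp [Prod.ext_iff]),
      by simp [Adj], rfl, by simp [Adj], rfl⟩
  · exact ⟨(s1, s2), (s1 + 1, s2 + 1),
      hmem _ (by simp [SquareCells]) (by simp [Prod.ext_iff]),
      hmem _ (by simp [SquareCells]) (by simp [Prod.ext_iff]),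
      by simp [Adj], rfl, by simp [Adj], rfl⟩
  · exact ⟨(s1 + 1, s2), (s1, s2 + 1),
      hmem _ (by simp [SquareCells]) (by simp [Prod.ext_iff]),
      hmem _ (by simp [SquareCells]) (by simp [Prod.ext_iff]),
      by simp [Adj], rfl, by simp [Adj], rfl⟩

/-- A reflex witness of `A` is a reflex witness of `A ∪ B`, provided no
cross adjacency between `A` and `B` is vertical (resp. horizontal). -/
lemma witness_union' (A B : Finset (ℤ × ℤ)) (hd : Disjoint A B)
    (hdir : (∀ p ∈ A, ∀ q ∈ B, Adj p q → p.1 ≠ q.1) ∨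
            (∀ p ∈ A, ∀ q ∈ B, Adj p q → p.2 ≠ q.2))
    (s : ℤ × ℤ) (h : ReflexWitness A s) : ReflexWitness (A ∪ B) s := by
  have hcard : (SquareCells s ∩ A).card = 3 := h
  have hempty : SquareCells s ∩ B = ∅ := by
    by_contra hne
    obtain ⟨q, hq⟩ := Finset.nonempty_iff_ne_empty.2 hne
    have hqT := (Finset.mem_inter.1 hq).1
    have hqB := (Finset.mem_inter.1 hq).2
    have hqA : q ∉ A := fun h' => Finset.disjoint_left.1 hd h' hqB
    obtain ⟨n, m, hnA, hmA, hadjn, hn1, hadjm, hm2⟩ := neighbors_in' A s q hcard hqT hqA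
    rcases hdir with hv | hh
    · exact hv n hnA q hqB hadjn hn1
    · exact hh m hmA q hqB hadjm hm2
  show (SquareCells s ∩ (A ∪ B)).card = 3
  rw [Finset.inter_union_distrib_left, hempty, Finset.union_empty]
  exact hcard

/-- The set of reflex witnesses of a finite set is finite. -/
lemma wit_finite' (P : Finset (ℤ × ℤ)) : {s : ℤ × ℤ | ReflexWitness P s}.Finite := by
  apply Set.Finite.subset (Finset.finite_toSet
    (P.biUnion fun p => ({p, (p.1 - 1, p.2), (p.1, p.2 - 1), (p.1 - 1, p.2 - 1)} :
      Finset (ℤ × ℤ))))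
  intro s hs
  have hcard : (SquareCells s ∩ P).card = 3 := hs
  have hnon : (SquareCells s ∩ P).Nonempty := by
    rw [← Finset.card_pos]; omega
  obtain ⟨x, hx⟩ := hnon
  have hxT := (Finset.mem_inter.1 hx).1
  have hxP := (Finset.mem_inter.1 hx).2
  refine Finset.mem_coe.2 (Finset.mem_biUnion.2 ⟨x, hxP, ?_⟩)
  simp only [SquareCells, Finset.mem_insert, Finset.mem_singleton] at hxT
  obtain ⟨s1, s2⟩ := s
  rcases hxT with rfl | rfl | rfl | rfl <;> simp [Prod.ext_iff] <;> omega

/-- The counting argument for Statement 11. -/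
lemma count11' (P P₁ P₂ : Finset (ℤ × ℤ)) (hunion : P₁ ∪ P₂ = P) (hd : Disjoint P₁ P₂)
    (hlift : ∀ s : ℤ × ℤ, ReflexWitness P₁ s ∨ ReflexWitness P₂ s → ReflexWitness P s)
    (href : AlongReflex P P₁ P₂) : wRef P₁ + wRef P₂ + 1 ≤ wRef P := by
  set A : Set (ℤ × ℤ) := {s | ReflexWitness P₁ s} with hA
  set B : Set (ℤ × ℤ) := {s | ReflexWitness P₂ s} with hB
  set W : Set (ℤ × ℤ) := {s | ReflexWitness P s} with hW
  have hAW : A ⊆ W := fun s hs => hlift s (Or.inl hs)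
  have hBW : B ⊆ W := fun s hs => hlift s (Or.inr hs)
  have hWfin : W.Finite := wit_finite' P
  have hAfin : A.Finite := hWfin.subset hAW
  have hBfin : B.Finite := hWfin.subset hBW
  have hinter : ∀ s : ℤ × ℤ,
      (SquareCells s ∩ P₁).card + (SquareCells s ∩ P₂).card ≤ 4 := by
    intro s
    have hdis : Disjoint (SquareCells s ∩ P₁) (SquareCells s ∩ P₂) :=
      hd.mono Finset.inter_subset_right Finset.inter_subset_right
    have hsub : (SquareCells s ∩ P₁) ∪ (SquareCells s ∩ P₂) ⊆ SquareCells s :=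
      Finset.union_subset Finset.inter_subset_left Finset.inter_subset_left
    have h4 := Finset.card_le_card hsub
    rw [squareCard'] at h4
    rw [Finset.card_union_of_disjoint hdis] at h4
    exact h4
  have hABdisj : Disjoint A B := by
    rw [Set.disjoint_left]
    intro s h1 h2
    have hc1 : (SquareCells s ∩ P₁).card = 3 := h1
    have hc2 : (SquareCells s ∩ P₂).card = 3 := h2
    have := hinter s
    omega
  obtain ⟨s₀, hs₀W, ⟨a, ha⟩, ⟨b, hb⟩⟩ := href
  have hsplit : SquareCells s₀ ∩ P = (SquareCells s₀ ∩ P₁) ∪ (SquareCells s₀ ∩ P₂) := by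
    rw [← Finset.inter_union_distrib_left, hunion]
  have hdis0 : Disjoint (SquareCells s₀ ∩ P₁) (SquareCells s₀ ∩ P₂) :=
    hd.mono Finset.inter_subset_right Finset.inter_subset_right
  have hcP : (SquareCells s₀ ∩ P).card = 3 := hs₀W
  have hsum : (SquareCells s₀ ∩ P₁).card + (SquareCells s₀ ∩ P₂).card = 3 := by
    rw [← Finset.card_union_of_disjoint hdis0, ← hsplit, hcP]
  have hp1 : 1 ≤ (SquareCells s₀ ∩ P₁).card := Finset.card_pos.2 ⟨a, ha⟩
  have hp2 : 1 ≤ (SquareCells s₀ ∩ P₂).card := Finset.card_pos.2 ⟨b, hb⟩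
  have hs₀AB : s₀ ∉ A ∪ B := by
    rintro (h1 | h1)
    · have hc1 : (SquareCells s₀ ∩ P₁).card = 3 := h1
      omega
    · have hc1 : (SquareCells s₀ ∩ P₂).card = 3 := h1
      omega
  have h1 : (A ∪ B).ncard = A.ncard + B.ncard :=
    Set.ncard_union_eq hABdisj hAfin hBfin
  have h2 : (A ∪ B ∪ {s₀}).ncard = (A ∪ B).ncard + 1 := by
    rw [Set.ncard_union_eq (Set.disjoint_singleton_right.2 hs₀AB)
      (hAfin.union hBfin) (Set.finite_singleton s₀), Set.ncard_singleton]
  have h3 : A ∪ B ∪ {s₀} ⊆ W := by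
    rintro s ((hs | hs) | hs)
    · exact hAW hs
    · exact hBW hs
    · rcases hs with rfl
      exact hs₀W
  have hfinal : (A ∪ B ∪ {s₀}).ncard ≤ W.ncard := Set.ncard_le_ncard h3 hWfin
  rw [h2, h1] at hfinal
  exact hfinal

end Stmt11Aux

/-- A valid vertical or horizontal straight 2-cut along a locally
reflex tile strictly decreases the total number of reflex witnesses:
`w(P₁) + w(P₂) ≤ w(P) - 1`. -/
theorem stmt11 (P P₁ P₂ : Finset (ℤ × ℤ))
    (hcut : (∃ c : ℤ, ValidVCut P P₁ P₂ c) ∨ (∃ c : ℤ, ValidHCut P P₁ P₂ c))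
    (href : AlongReflex P P₁ P₂) :
    wRef P₁ + wRef P₂ + 1 ≤ wRef P := by
  rcases hcut with ⟨c, ⟨hu, hd, _, _, _, _, hadj⟩, _⟩ | ⟨c, ⟨hu, hd, _, _, _, _, hadj⟩, _⟩
  · refine count11' P P₁ P₂ hu hd (fun s hs => ?_) href
    rcases hs with h | h
    · have h' := witness_union' P₁ P₂ hd
        (Or.inl fun p hp q hq ha => by obtain ⟨h1, h2, _⟩ := hadj p hp q hq ha; omega) s h
      rwa [hu] at h'
    · have h' := witness_union' P₂ P₁ hd.symm
        (Or.inl fun q hq p hp ha => by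
          obtain ⟨h1, h2, _⟩ := hadj p hp q hq (adj_symm' ha); omega) s h
      rwa [Finset.union_comm, hu] at h'
  · refine count11' P P₁ P₂ hu hd (fun s hs => ?_) href
    rcases hs with h | h
    · have h' := witness_union' P₁ P₂ hd
        (Or.inr fun p hp q hq ha => by obtain ⟨h1, h2, _⟩ := hadj p hp q hq ha; omega) s h
      rwa [hu] at h'
    · have h' := witness_union' P₂ P₁ hd.symm
        (Or.inr fun q hq p hp ha => by
          obtain ⟨h1, h2, _⟩ := hadj p hp q hq (adj_symm' ha); omega) s h
      rwa [Finset.union_comm, hu] at h'
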